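/- The graph G₀ is a minor of the complete bipartite graph K_{8,8}; however, every bipartite assignment (A1, A2) of G₀ into K_{8,8} satisfies |A1 ∩ A2| ≥ 2. In particular, no embedding of G₀ into K_{8,8} assigns only the vertices of a minimum-size odd cycle transversal of G₀ (which has size 1) to both parts. -/

import Mathlib

/-- A minor model of `G` in `H`: a family of pairwise disjoint nonempty branch sets,
each inducing a connected subgraph of `H`, with an edge of `H` joining the branch sets
of any two adjacent vertices of `G`. -/
structure MinorModel {V W : Type*} (G : SimpleGraph V) (H : SimpleGraph W) where
  B : V → Set W
  nonempty : ∀ v, (B v).Nonempty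
  pairwiseDisjoint : ∀ ⦃u v : V⦄, u ≠ v → Disjoint (B u) (B v)
  connected : ∀ v, (H.induce (B v)).Connected
  edge : ∀ ⦃u v : V⦄, G.Adj u v → ∃ x ∈ B u, ∃ y ∈ B v, H.Adj x y

/-- `G` is a minor of `H`. -/
def SimpleGraph.IsMinorOf {V W : Type*} (G : SimpleGraph V) (H : SimpleGraph W) : Prop :=
  Nonempty (MinorModel G H)

/-- A bipartite assignment of `G` into the complete bipartite graph `K_{m1,m2}`. -/
def SimpleGraph.BipartiteAssignment {V : Type*} (G : SimpleGraph V) (m1 m2 : ℕ)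
    (A1 A2 : Set V) : Prop :=
  A1 ∪ A2 = Set.univ ∧ A1.ncard ≤ m1 ∧ A2.ncard ≤ m2 ∧
    ∀ ⦃u v : V⦄, G.Adj u v → (u ∈ A1 ∧ v ∈ A2) ∨ (u ∈ A2 ∧ v ∈ A1)

/-- `G − S` is bipartite, i.e. `S` is an odd cycle transversal of `G`. -/
def SimpleGraph.DelBipartite {V : Type*} (G : SimpleGraph V) (S : Set V) : Prop :=
  ∃ X Y : Set V, Disjoint X Y ∧ X ∪ Y = Sᶜ ∧
    ∀ ⦃u v : V⦄, G.Adj u v → u ∉ S → v ∉ S → (u ∈ X ∧ v ∈ Y) ∨ (u ∈ Y ∧ v ∈ X)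

/-- The vertex set of the example graph `G₀`. -/
inductive V0 : Type
  | v1 | v2 | v3 | a1 | a2 | a3 | a4 | b1 | b2 | b3 | b4
deriving DecidableEq

instance instFintypeV0 : Fintype V0 where
  elems := {V0.v1, V0.v2, V0.v3, V0.a1, V0.a2, V0.a3, V0.a4, V0.b1, V0.b2, V0.b3, V0.b4}
  complete := by intro x; cases x <;> decide

/-- The set `V_A = {a1, a2, a3, a4}`. -/
def VA : Set V0 := {V0.a1, V0.a2, V0.a3, V0.a4}

/-- The set `V_B = {b1, b2, b3, b4}`. -/
def VB : Set V0 := {V0.b1, V0.b2, V0.b3, V0.b4}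

/-- The example graph `G₀`: edges are `{v1,v2}`, `{v1,a}` and `{v2,a}` and `{v3,a}` for
all `a ∈ V_A`, and `{v3,b}` for all `b ∈ V_B`. -/
def G0 : SimpleGraph V0 :=
  SimpleGraph.fromRel fun x y =>
    (x = V0.v1 ∧ y = V0.v2) ∨ (x = V0.v1 ∧ y ∈ VA) ∨ (x = V0.v2 ∧ y ∈ VA) ∨
      (x = V0.v3 ∧ y ∈ VA) ∨ (x = V0.v3 ∧ y ∈ VB)

abbrev W88 := Fin 8 ⊕ Fin 8

/-- branch sets -/
def B0 : V0 → Set W88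
  | V0.v1 => {Sum.inl 0, Sum.inr 0}
  | V0.v2 => {Sum.inr 2}
  | V0.v3 => {Sum.inl 1, Sum.inr 1}
  | V0.a1 => {Sum.inl 2}
  | V0.a2 => {Sum.inl 3}
  | V0.a3 => {Sum.inl 4}
  | V0.a4 => {Sum.inl 5}
  | V0.b1 => {Sum.inr 3}
  | V0.b2 => {Sum.inr 4}
  | V0.b3 => {Sum.inl 6}
  | V0.b4 => {Sum.inl 7}


lemma conn_single (H : SimpleGraph W88) (x : W88) : (H.induce {x}).Connected := by
  constructor
  rintro ⟨a, ha⟩ ⟨b, hb⟩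
  have : a = b := by
    simp only [Set.mem_singleton_iff] at ha hb; rw [ha, hb]
  subst this
  rfl

lemma conn_pair (H : SimpleGraph W88) (x y : W88) (hadj : H.Adj x y) :
    (H.induce {x, y}).Connected := by
  constructor
  rintro ⟨a, ha⟩ ⟨b, hb⟩
  rcases ha with rfl | ha <;> rcases hb with rfl | hb
  · rfl
  · rw [Set.mem_singleton_iff] at hb; subst hb
    exact SimpleGraph.Adj.reachable hadj
  · rw [Set.mem_singleton_iff] at ha; subst ha
    exact SimpleGraph.Adj.reachable hadj.symm
  · rw [Set.mem_singleton_iff] at ha hb; subst ha; subst hb; rfl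

lemma keyLR (i j : Fin 8) :
    (completeBipartiteGraph (Fin 8) (Fin 8)).Adj (Sum.inl i) (Sum.inr j) :=
  Or.inl ⟨rfl, rfl⟩

lemma keyRL (i j : Fin 8) :
    (completeBipartiteGraph (Fin 8) (Fin 8)).Adj (Sum.inr i) (Sum.inl j) :=
  Or.inr ⟨rfl, rfl⟩

lemma minor1 : Nonempty (MinorModel G0 (completeBipartiteGraph (Fin 8) (Fin 8))) := by
  refine ⟨⟨B0, ?_, ?_, ?_, ?_⟩⟩
  · intro v
    cases v <;> first | exact ⟨_, Or.inl rfl⟩ | exact ⟨_, rfl⟩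
  · intro u v huv
    rw [Set.disjoint_left]
    intro a hau hav
    cases u <;> cases v <;> simp_all [B0] <;>
      rcases hau with rfl | rfl <;> simp_all
  · intro v
    cases v
    · exact conn_pair _ _ _ (keyLR 0 0)
    · exact conn_single _ _
    · exact conn_pair _ _ _ (keyLR 1 1)
    all_goals exact conn_single _ _
  · intro u v huv
    rw [G0, SimpleGraph.fromRel_adj] at huv
    obtain ⟨hne, hr⟩ := huv
    rcases hr with (⟨rfl, rfl⟩ | ⟨rfl, h⟩ | ⟨rfl, h⟩ | ⟨rfl, h⟩ | ⟨rfl, h⟩) |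
      (⟨rfl, rfl⟩ | ⟨rfl, h⟩ | ⟨rfl, h⟩ | ⟨rfl, h⟩ | ⟨rfl, h⟩)
    · exact ⟨Sum.inl 0, Or.inl rfl, Sum.inr 2, rfl, keyLR 0 2⟩
    · simp only [VA, Set.mem_insert_iff, Set.mem_singleton_iff] at h
      rcases h with rfl | rfl | rfl | rfl <;>
        exact ⟨Sum.inr 0, Or.inr rfl, _, rfl, keyRL 0 _⟩
    · simp only [VA, Set.mem_insert_iff, Set.mem_singleton_iff] at h
      rcases h with rfl | rfl | rfl | rfl <;>
        exact ⟨Sum.inr 2, rfl, _, rfl, keyRL 2 _⟩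
    · simp only [VA, Set.mem_insert_iff, Set.mem_singleton_iff] at h
      rcases h with rfl | rfl | rfl | rfl <;>
        exact ⟨Sum.inr 1, Or.inr rfl, _, rfl, keyRL 1 _⟩
    · simp only [VB, Set.mem_insert_iff, Set.mem_singleton_iff] at h
      rcases h with rfl | rfl | rfl | rfl
      · exact ⟨Sum.inl 1, Or.inl rfl, _, rfl, keyLR 1 3⟩
      · exact ⟨Sum.inl 1, Or.inl rfl, _, rfl, keyLR 1 4⟩
      · exact ⟨Sum.inr 1, Or.inr rfl, _, rfl, keyRL 1 6⟩
      · exact ⟨Sum.inr 1, Or.inr rfl, _, rfl, keyRL 1 7⟩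
    · exact ⟨Sum.inr 2, rfl, Sum.inl 0, Or.inl rfl, keyRL 2 0⟩
    · simp only [VA, Set.mem_insert_iff, Set.mem_singleton_iff] at h
      rcases h with rfl | rfl | rfl | rfl <;>
        exact ⟨_, rfl, Sum.inr 0, Or.inr rfl, keyLR _ 0⟩
    · simp only [VA, Set.mem_insert_iff, Set.mem_singleton_iff] at h
      rcases h with rfl | rfl | rfl | rfl <;>
        exact ⟨_, rfl, Sum.inr 2, rfl, keyLR _ 2⟩
    · simp only [VA, Set.mem_insert_iff, Set.mem_singleton_iff] at h
      rcases h with rfl | rfl | rfl | rfl <;>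
        exact ⟨_, rfl, Sum.inr 1, Or.inr rfl, keyLR _ 1⟩
    · simp only [VB, Set.mem_insert_iff, Set.mem_singleton_iff] at h
      rcases h with rfl | rfl | rfl | rfl
      · exact ⟨_, rfl, Sum.inl 1, Or.inl rfl, keyRL 3 1⟩
      · exact ⟨_, rfl, Sum.inl 1, Or.inl rfl, keyRL 4 1⟩
      · exact ⟨_, rfl, Sum.inr 1, Or.inr rfl, keyLR 6 1⟩
      · exact ⟨_, rfl, Sum.inr 1, Or.inr rfl, keyLR 7 1⟩

lemma adjG12 : G0.Adj V0.v1 V0.v2 := by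
  rw [G0, SimpleGraph.fromRel_adj]
  exact ⟨by decide, Or.inl (Or.inl ⟨rfl, rfl⟩)⟩

lemma adjG1 (a : V0) (h : a ∈ VA) : G0.Adj V0.v1 a := by
  rw [G0, SimpleGraph.fromRel_adj]
  refine ⟨?_, Or.inl (Or.inr (Or.inl ⟨rfl, h⟩))⟩
  rcases h with rfl|rfl|rfl|rfl <;> decide

lemma adjG2 (a : V0) (h : a ∈ VA) : G0.Adj V0.v2 a := by
  rw [G0, SimpleGraph.fromRel_adj]
  refine ⟨?_, Or.inl (Or.inr (Or.inr (Or.inl ⟨rfl, h⟩)))⟩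
  rcases h with rfl|rfl|rfl|rfl <;> decide

lemma adjG3A (a : V0) (h : a ∈ VA) : G0.Adj V0.v3 a := by
  rw [G0, SimpleGraph.fromRel_adj]
  refine ⟨?_, Or.inl (Or.inr (Or.inr (Or.inr (Or.inl ⟨rfl, h⟩))))⟩
  rcases h with rfl|rfl|rfl|rfl <;> decide

lemma adjG3B (b : V0) (h : b ∈ VB) : G0.Adj V0.v3 b := by
  rw [G0, SimpleGraph.fromRel_adj]
  refine ⟨?_, Or.inl (Or.inr (Or.inr (Or.inr (Or.inr ⟨rfl, h⟩))))⟩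
  rcases h with rfl|rfl|rfl|rfl <;> decide

lemma nine_le (A : Set V0) (c : V0) (hc : c = V0.v1 ∨ c = V0.v2) (h0 : c ∈ A)
    (hA : ∀ a, a ∈ VA → a ∈ A) (hB : ∀ b, b ∈ VB → b ∈ A) : 9 ≤ A.ncard := by
  have hsub : ({c, V0.a1, V0.a2, V0.a3, V0.a4, V0.b1, V0.b2, V0.b3, V0.b4} : Set V0) ⊆ A := by
    intro x hx
    rcases hx with rfl|rfl|rfl|rfl|rfl|rfl|rfl|rfl|rfl
    · exact h0
    · exact hA _ (Or.inl rfl)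
    · exact hA _ (Or.inr (Or.inl rfl))
    · exact hA _ (Or.inr (Or.inr (Or.inl rfl)))
    · exact hA _ (Or.inr (Or.inr (Or.inr rfl)))
    · exact hB _ (Or.inl rfl)
    · exact hB _ (Or.inr (Or.inl rfl))
    · exact hB _ (Or.inr (Or.inr (Or.inl rfl)))
    · exact hB _ (Or.inr (Or.inr (Or.inr rfl)))
  have hco : ({c, V0.a1, V0.a2, V0.a3, V0.a4, V0.b1, V0.b2, V0.b3, V0.b4} : Set V0)
      = (↑({c, V0.a1, V0.a2, V0.a3, V0.a4, V0.b1, V0.b2, V0.b3, V0.b4} : Finset V0) : Set V0) := by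
    simp
  have hcard : ({c, V0.a1, V0.a2, V0.a3, V0.a4, V0.b1, V0.b2, V0.b3, V0.b4} : Finset V0).card = 9 := by
    rcases hc with rfl|rfl <;> decide
  have := Set.ncard_le_ncard hsub A.toFinite
  rwa [hco, Set.ncard_coe_finset, hcard] at this

theorem part2 (A1 A2 : Set V0) (h : G0.BipartiteAssignment 8 8 A1 A2) :
    2 ≤ (A1 ∩ A2).ncard := by
  obtain ⟨hun, h1, h2, hcond⟩ := h
  by_contra hlt
  push_neg at hlt
  have huniq : ∀ x ∈ A1 ∩ A2, ∀ y ∈ A1 ∩ A2, x = y := by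
    intro x hx y hy
    by_contra hne
    have : 1 < (A1 ∩ A2).ncard :=
      (Set.one_lt_ncard (Set.toFinite _)).mpr ⟨x, hx, y, hy, hne⟩
    omega
  have tri : ∀ a : V0, a ∈ VA →
      (V0.v1 ∈ A1 ∩ A2 ∨ V0.v2 ∈ A1 ∩ A2 ∨ a ∈ A1 ∩ A2) := by
    intro a ha
    rcases hcond adjG12 with ⟨p1, p2⟩ | ⟨p1, p2⟩ <;>
      rcases hcond (adjG1 a ha) with ⟨q1, q2⟩ | ⟨q1, q2⟩ <;>
      rcases hcond (adjG2 a ha) with ⟨r1, r2⟩ | ⟨r1, r2⟩ <;>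
      simp only [Set.mem_inter_iff] <;> tauto
  rcases tri V0.a1 (Or.inl rfl) with hx | hx | hx
  rotate_right
  · -- a1 in both: contradiction with triangle on a2
    rcases tri V0.a2 (Or.inr (Or.inl rfl)) with hy | hy | hy <;>
      exact absurd (huniq _ hx _ hy) (by decide)
  -- case v1 ∈ A1 ∩ A2
  · obtain ⟨hv1A1, hv1A2⟩ := hx
    rcases hcond (adjG2 V0.a1 (Or.inl rfl)) with ⟨hv2A1, _⟩ | ⟨hv2A2, _⟩
    · have hv2n2 : V0.v2 ∉ A2 := fun hh =>
        absurd (huniq _ ⟨hv2A1, hh⟩ _ ⟨hv1A1, hv1A2⟩) (by decide)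
      have haA2 : ∀ a, a ∈ VA → a ∈ A2 := by
        intro a ha
        rcases hcond (adjG2 a ha) with ⟨_, q⟩ | ⟨q, _⟩
        · exact q
        · exact absurd q hv2n2
      have haN1 : ∀ a, a ∈ VA → a ∉ A1 := by
        intro a ha hh
        have := huniq _ ⟨hh, haA2 a ha⟩ _ ⟨hv1A1, hv1A2⟩
        rcases ha with rfl|rfl|rfl|rfl <;> simp_all
      have hv3A1 : V0.v3 ∈ A1 := by
        rcases hcond (adjG3A V0.a1 (Or.inl rfl)) with ⟨q, _⟩ | ⟨_, q⟩
        · exact q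
        · exact absurd q (haN1 _ (Or.inl rfl))
      have hv3n2 : V0.v3 ∉ A2 := fun hh =>
        absurd (huniq _ ⟨hv3A1, hh⟩ _ ⟨hv1A1, hv1A2⟩) (by decide)
      have hbA2 : ∀ b, b ∈ VB → b ∈ A2 := by
        intro b hb
        rcases hcond (adjG3B b hb) with ⟨_, q⟩ | ⟨q, _⟩
        · exact q
        · exact absurd q hv3n2
      have := nine_le A2 V0.v1 (Or.inl rfl) hv1A2 haA2 hbA2
      omega
    · have hv2n1 : V0.v2 ∉ A1 := fun hh =>
        absurd (huniq _ ⟨hh, hv2A2⟩ _ ⟨hv1A1, hv1A2⟩) (by decide)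
      have haA1 : ∀ a, a ∈ VA → a ∈ A1 := by
        intro a ha
        rcases hcond (adjG2 a ha) with ⟨q, _⟩ | ⟨_, q⟩
        · exact absurd q hv2n1
        · exact q
      have haN2 : ∀ a, a ∈ VA → a ∉ A2 := by
        intro a ha hh
        have := huniq _ ⟨haA1 a ha, hh⟩ _ ⟨hv1A1, hv1A2⟩
        rcases ha with rfl|rfl|rfl|rfl <;> simp_all
      have hv3A2 : V0.v3 ∈ A2 := by
        rcases hcond (adjG3A V0.a1 (Or.inl rfl)) with ⟨_, q⟩ | ⟨q, _⟩
        · exact absurd q (haN2 _ (Or.inl rfl))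
        · exact q
      have hv3n1 : V0.v3 ∉ A1 := fun hh =>
        absurd (huniq _ ⟨hh, hv3A2⟩ _ ⟨hv1A1, hv1A2⟩) (by decide)
      have hbA1 : ∀ b, b ∈ VB → b ∈ A1 := by
        intro b hb
        rcases hcond (adjG3B b hb) with ⟨q, _⟩ | ⟨_, q⟩
        · exact absurd q hv3n1
        · exact q
      have := nine_le A1 V0.v1 (Or.inl rfl) hv1A1 haA1 hbA1
      omega
  -- case v2 ∈ A1 ∩ A2
  · obtain ⟨hv2A1, hv2A2⟩ := hx
    rcases hcond (adjG1 V0.a1 (Or.inl rfl)) with ⟨hv1A1, _⟩ | ⟨hv1A2, _⟩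
    · have hv1n2 : V0.v1 ∉ A2 := fun hh =>
        absurd (huniq _ ⟨hv1A1, hh⟩ _ ⟨hv2A1, hv2A2⟩) (by decide)
      have haA2 : ∀ a, a ∈ VA → a ∈ A2 := by
        intro a ha
        rcases hcond (adjG1 a ha) with ⟨_, q⟩ | ⟨q, _⟩
        · exact q
        · exact absurd q hv1n2
      have haN1 : ∀ a, a ∈ VA → a ∉ A1 := by
        intro a ha hh
        have := huniq _ ⟨hh, haA2 a ha⟩ _ ⟨hv2A1, hv2A2⟩
        rcases ha with rfl|rfl|rfl|rfl <;> simp_all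
      have hv3A1 : V0.v3 ∈ A1 := by
        rcases hcond (adjG3A V0.a1 (Or.inl rfl)) with ⟨q, _⟩ | ⟨_, q⟩
        · exact q
        · exact absurd q (haN1 _ (Or.inl rfl))
      have hv3n2 : V0.v3 ∉ A2 := fun hh =>
        absurd (huniq _ ⟨hv3A1, hh⟩ _ ⟨hv2A1, hv2A2⟩) (by decide)
      have hbA2 : ∀ b, b ∈ VB → b ∈ A2 := by
        intro b hb
        rcases hcond (adjG3B b hb) with ⟨_, q⟩ | ⟨q, _⟩
        · exact q
        · exact absurd q hv3n2
      have := nine_le A2 V0.v2 (Or.inr rfl) hv2A2 haA2 hbA2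
      omega
    · have hv1n1 : V0.v1 ∉ A1 := fun hh =>
        absurd (huniq _ ⟨hh, hv1A2⟩ _ ⟨hv2A1, hv2A2⟩) (by decide)
      have haA1 : ∀ a, a ∈ VA → a ∈ A1 := by
        intro a ha
        rcases hcond (adjG1 a ha) with ⟨q, _⟩ | ⟨_, q⟩
        · exact absurd q hv1n1
        · exact q
      have haN2 : ∀ a, a ∈ VA → a ∉ A2 := by
        intro a ha hh
        have := huniq _ ⟨haA1 a ha, hh⟩ _ ⟨hv2A1, hv2A2⟩
        rcases ha with rfl|rfl|rfl|rfl <;> simp_all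
      have hv3A2 : V0.v3 ∈ A2 := by
        rcases hcond (adjG3A V0.a1 (Or.inl rfl)) with ⟨_, q⟩ | ⟨q, _⟩
        · exact absurd q (haN2 _ (Or.inl rfl))
        · exact q
      have hv3n1 : V0.v3 ∉ A1 := fun hh =>
        absurd (huniq _ ⟨hh, hv3A2⟩ _ ⟨hv2A1, hv2A2⟩) (by decide)
      have hbA1 : ∀ b, b ∈ VB → b ∈ A1 := by
        intro b hb
        rcases hcond (adjG3B b hb) with ⟨q, _⟩ | ⟨_, q⟩
        · exact absurd q hv3n1
        · exact q
      have := nine_le A1 V0.v2 (Or.inr rfl) hv2A1 haA1 hbA1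
      omega


/-- `G₀` is a minor of `K_{8,8}`, but every bipartite assignment `(A1, A2)`
of `G₀` into `K_{8,8}` satisfies `|A1 ∩ A2| ≥ 2`; in particular, no embedding of `G₀`
into `K_{8,8}` assigns only the vertices of a minimum-size odd cycle transversal of `G₀`
(which has size 1) to both parts. -/
theorem stmt11 :
    G0.IsMinorOf (completeBipartiteGraph (Fin 8) (Fin 8)) ∧
    (∀ A1 A2 : Set V0, G0.BipartiteAssignment 8 8 A1 A2 → 2 ≤ (A1 ∩ A2).ncard) ∧
    (∀ S : Set V0, G0.DelBipartite S → S.ncard = 1 →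
      ∀ A1 A2 : Set V0, G0.BipartiteAssignment 8 8 A1 A2 → A1 ∩ A2 ≠ S) := by
  refine ⟨minor1, part2, ?_⟩
  intro S _hdel hS A1 A2 hBA hEq
  have h2 := part2 A1 A2 hBA
  rw [hEq, hS] at h2
  omega
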